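/- Any abelian Lie subalgebra of the Kohno–Drinfeld Lie algebra t_n contained in the span of the generators t_{ij} has dimension at most n - 1. -/

import Mathlib

open Finset

open Module Submodule

private lemma helper_collinear {K M : Type*} [Field K] [AddCommGroup M] [Module K M]
    {x y z w : M} (h1 : x - y ∈ Submodule.span K {w}) (h2 : x - z ∈ Submodule.span K {w}) :
    z ∈ Submodule.span K {x, y} ∨ x = y := by
  rw [Submodule.mem_span_singleton] at h1 h2
  obtain ⟨α, hα⟩ := h1
  obtain ⟨β, hβ⟩ := h2
  by_cases hα0 : α = 0
  · right
    have h : x - y = 0 := by rw [← hα, hα0, zero_smul]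
    exact sub_eq_zero.mp h
  · left
    rw [Submodule.mem_span_pair]
    refine ⟨1 - β * α⁻¹, β * α⁻¹, ?_⟩
    have hw : w = α⁻¹ • (x - y) := by
      rw [← hα, smul_smul, inv_mul_cancel₀ hα0, one_smul]
    have hz : z = x - (β * α⁻¹) • (x - y) := by
      have h : z = x - β • w := by
        have := hβ; rw [eq_sub_iff_add_eq] at this ⊢
        rw [← this]; abel
      rw [h, hw, smul_smul]
    rw [hz]
    module

private lemma span_bound {K M : Type*} [Field K] [AddCommGroup M] [Module K M] :
    ∀ (n : ℕ) (Q : Fin n → Fin n → M), (∀ i j, Q i j = Q j i) →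
    (∀ i j k : Fin n, i < j → j < k →
      ∃ w : M, Q i j - Q i k ∈ Submodule.span K {w} ∧ Q i j - Q j k ∈ Submodule.span K {w} ∧
        Q i k - Q j k ∈ Submodule.span K {w}) →
    Module.finrank K (Submodule.span K {x : M | ∃ i j, i ≠ j ∧ x = Q i j}) ≤ n - 1 := by
  intro n
  induction n with
  | zero =>
    intro Q _ _
    have h : {x : M | ∃ i j, i ≠ j ∧ x = Q i j} = ∅ := by
      ext x; simp only [Set.mem_setOf_eq, Set.mem_empty_iff_false, iff_false]
      rintro ⟨i, _, _, _⟩; exact i.elim0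
    rw [h, Submodule.span_empty, finrank_bot]
  | succ n IH =>
    intro Q hsym H
    set lst : Fin (n+1) := Fin.last n with hlst
    set Q' : Fin n → Fin n → M := fun i j => Q i.castSucc j.castSucc with hQ'
    have hsym' : ∀ i j, Q' i j = Q' j i := fun i j => hsym _ _
    have H' : ∀ i j k : Fin n, i < j → j < k →
        ∃ w : M, Q' i j - Q' i k ∈ Submodule.span K {w} ∧ Q' i j - Q' j k ∈ Submodule.span K {w} ∧
          Q' i k - Q' j k ∈ Submodule.span K {w} := by
      intro i j k hij hjk
      exact H i.castSucc j.castSucc k.castSucc (by simpa using hij) (by simpa using hjk)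
    have hA := IH Q' hsym' H'
    set S' : Set M := {x : M | ∃ i j : Fin n, i ≠ j ∧ x = Q' i j} with hS'
    set A := Submodule.span K S' with hAdef
    have hS'fin : S'.Finite := by
      apply (Set.finite_range (fun p : Fin n × Fin n => Q' p.1 p.2)).subset
      rintro x ⟨i, j, _, rfl⟩; exact ⟨(i, j), rfl⟩
    haveI : FiniteDimensional K A := FiniteDimensional.span_of_finite K hS'fin
    have hmemA : ∀ a b : Fin (n+1), a ≠ b → a ≠ lst → b ≠ lst → Q a b ∈ A := by
      intro a b hab ha hb
      obtain ⟨a', rfl⟩ := Fin.exists_castSucc_eq.mpr ha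
      obtain ⟨b', rfl⟩ := Fin.exists_castSucc_eq.mpr hb
      exact Submodule.subset_span ⟨a', b', fun h => hab (by rw [h]), rfl⟩
    have key : ∀ i₀ i : Fin (n+1), i₀ ≠ i → i₀ ≠ lst → i ≠ lst →
        Q i lst ∈ Submodule.span K {Q i₀ i, Q i₀ lst} ∨ Q i₀ i = Q i₀ lst := by
      intro i₀ i hne h₀ hi
      rcases lt_or_gt_of_ne hne with hlt | hgt
      · obtain ⟨w, h1, h2, _⟩ := H i₀ i lst hlt (lt_of_le_of_ne (Fin.le_last i) hi)
        exact helper_collinear h1 h2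
      · obtain ⟨w, h1, h2, _⟩ := H i i₀ lst hgt (lt_of_le_of_ne (Fin.le_last i₀) h₀)
        have := helper_collinear h2 h1
        rwa [hsym i i₀] at this
    by_cases hall : ∀ i : Fin (n+1), i ≠ lst → Q i lst ∈ A
    · have hle : Submodule.span K {x : M | ∃ i j, i ≠ j ∧ x = Q i j} ≤ A := by
        rw [Submodule.span_le]
        rintro x ⟨i, j, hij, rfl⟩
        by_cases hi : i = lst
        · subst hi
          rw [hsym]
          exact hall j (fun h => hij (h.symm ▸ rfl))
        · by_cases hj : j = lst
          · subst hj; exact hall i hi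
          · exact hmemA i j hij hi hj
      calc Module.finrank K (Submodule.span K {x : M | ∃ i j, i ≠ j ∧ x = Q i j})
          ≤ Module.finrank K A := Submodule.finrank_mono hle
        _ ≤ n - 1 := hA
        _ ≤ (n + 1) - 1 := by omega
    · push_neg at hall
      obtain ⟨i₀, h₀, hz⟩ := hall
      set z := Q i₀ lst with hzdef
      haveI : FiniteDimensional K (Submodule.span K ({z} : Set M)) :=
        FiniteDimensional.span_of_finite K (Set.finite_singleton z)
      have hstar : ∀ i : Fin (n+1), i ≠ lst → Q i lst ∈ A ⊔ Submodule.span K ({z} : Set M) := by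
        intro i hi
        by_cases hii : i = i₀
        · subst hii
          exact Submodule.mem_sup_right (Submodule.mem_span_singleton_self z)
        · rcases key i₀ i (fun h => hii (h.symm)) h₀ hi with hsp | heq
          · have hpair : Submodule.span K ({Q i₀ i, Q i₀ lst} : Set M)
                ≤ A ⊔ Submodule.span K ({z} : Set M) := by
              rw [Submodule.span_le]
              rintro x (rfl | rfl)
              · exact Submodule.mem_sup_left (hmemA i₀ i (fun h => hii h.symm) h₀ hi)
              · exact Submodule.mem_sup_right (Submodule.mem_span_singleton_self z)
            exact hpair hsp
          · have hmem := hmemA i₀ i (fun h => hii h.symm) h₀ hi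
            rw [heq] at hmem
            exact absurd hmem hz
      have hle : Submodule.span K {x : M | ∃ i j, i ≠ j ∧ x = Q i j}
          ≤ A ⊔ Submodule.span K ({z} : Set M) := by
        rw [Submodule.span_le]
        rintro x ⟨i, j, hij, rfl⟩
        by_cases hi : i = lst
        · subst hi
          rw [hsym]
          exact hstar j (fun h => hij (h.symm ▸ rfl))
        · by_cases hj : j = lst
          · subst hj; exact hstar i hi
          · exact Submodule.mem_sup_left (hmemA i j hij hi hj)
      have hn1 : 1 ≤ n := by
        rcases Nat.eq_zero_or_pos n with rfl | h
        · exact absurd (Fin.fin_one_eq_zero i₀ ▸ Fin.fin_one_eq_zero lst ▸ rfl) h₀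
        · exact h
      have hzr : Module.finrank K (Submodule.span K ({z} : Set M)) ≤ 1 := by
        simpa using finrank_span_le_card ({z} : Set M)
      calc Module.finrank K (Submodule.span K {x : M | ∃ i j, i ≠ j ∧ x = Q i j})
          ≤ Module.finrank K (A ⊔ Submodule.span K ({z} : Set M) : Submodule K M) :=
            Submodule.finrank_mono hle
        _ ≤ Module.finrank K A + Module.finrank K (Submodule.span K ({z} : Set M)) :=
            Submodule.finrank_add_le_finrank_add_finrank _ _
        _ ≤ (n + 1) - 1 := by omega


section LieStuff

variable {K L : Type*} [Field K] [LieRing L] [LieAlgebra K L] {n : ℕ}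

private lemma br2 (t : Fin n → Fin n → L)
    (hrel2 : ∀ i j k : Fin n, i ≠ j → i ≠ k → j ≠ k → ⁅t i j, t i k + t j k⁆ = 0)
    (a b c : Fin n) (hab : a < b) (hbc : b < c) :
    ⁅t a b, t a c⁆ = -⁅t a b, t b c⁆ := by
  have h := hrel2 a b c hab.ne (hab.trans hbc).ne hbc.ne
  rw [lie_add] at h
  exact eq_neg_of_add_eq_zero_left h

private lemma br3 (t : Fin n → Fin n → L)
    (hsymm : ∀ i j, t i j = t j i)
    (hrel2 : ∀ i j k : Fin n, i ≠ j → i ≠ k → j ≠ k → ⁅t i j, t i k + t j k⁆ = 0)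
    (a b c : Fin n) (hab : a < b) (hbc : b < c) :
    ⁅t a c, t b c⁆ = -⁅t a b, t b c⁆ := by
  have h := hrel2 a c b (hab.trans hbc).ne hab.ne hbc.ne'
  rw [lie_add, hsymm c b] at h
  have h2 : ⁅t a c, t a b⁆ = ⁅t a b, t b c⁆ := by
    rw [← lie_skew, br2 t hrel2 a b c hab hbc, neg_neg]
  rw [h2] at h
  exact eq_neg_of_add_eq_zero_right h

/-- Classification of brackets of generators. -/
private lemma bracket_classify (t : Fin n → Fin n → L)
    (hsymm : ∀ i j, t i j = t j i)
    (hrel1 : ∀ i j k l : Fin n, i ≠ j → i ≠ k → i ≠ l → j ≠ k → j ≠ l → k ≠ l →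
      ⁅t i j, t k l⁆ = 0)
    (hrel2 : ∀ i j k : Fin n, i ≠ j → i ≠ k → j ≠ k → ⁅t i j, t i k + t j k⁆ = 0)
    (p q : {p : Fin n × Fin n // p.1 < p.2}) :
    ⁅t p.1.1 p.1.2, t q.1.1 q.1.2⁆ = 0 ∨
    ∃ T' : {q' : Fin n × Fin n × Fin n // q'.1 < q'.2.1 ∧ q'.2.1 < q'.2.2},
      (⁅t p.1.1 p.1.2, t q.1.1 q.1.2⁆ = ⁅t T'.1.1 T'.1.2.1, t T'.1.2.1 T'.1.2.2⁆ ∨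
       ⁅t p.1.1 p.1.2, t q.1.1 q.1.2⁆ = -⁅t T'.1.1 T'.1.2.1, t T'.1.2.1 T'.1.2.2⁆) ∧
      (p.1 = (T'.1.1, T'.1.2.1) ∨ p.1 = (T'.1.1, T'.1.2.2) ∨ p.1 = (T'.1.2.1, T'.1.2.2)) ∧
      (q.1 = (T'.1.1, T'.1.2.1) ∨ q.1 = (T'.1.1, T'.1.2.2) ∨ q.1 = (T'.1.2.1, T'.1.2.2)) := by
  obtain ⟨⟨a, b⟩, hab⟩ := p
  obtain ⟨⟨c, d⟩, hcd⟩ := q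
  simp only at hab hcd ⊢
  by_cases hac : a = c
  · subst hac
    by_cases hbd : b = d
    · subst hbd; left; exact lie_self _
    · rcases lt_or_gt_of_ne hbd with h | h
      · -- a<b<d : ⁅t a b, t a d⁆ = -c(a,b,d)
        right
        exact ⟨⟨(a, b, d), ⟨hab, h⟩⟩, Or.inr (br2 t hrel2 a b d hab h),
          Or.inl rfl, Or.inr (Or.inl rfl)⟩
      · -- a<d<b : ⁅t a b, t a d⁆ = ⁅t a d, t d b⁆... 
        right
        refine ⟨⟨(a, d, b), ⟨hcd, h⟩⟩, Or.inl ?_, Or.inr (Or.inl rfl), Or.inl rfl⟩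
        rw [← lie_skew, br2 t hrel2 a d b hcd h, neg_neg]
  · by_cases had : a = d
    · -- c < d = a < b : triple (c,a,b); p=(a,b)=(2.1,2.2), q=(c,a)=(1,2.1)
      subst had
      right
      refine ⟨⟨(c, a, b), ⟨hcd, hab⟩⟩, Or.inr ?_, Or.inr (Or.inr rfl), Or.inl rfl⟩
      rw [← lie_skew]
    · by_cases hbc : b = c
      · -- a < b = c < d : triple (a,b,d); p = (1,2.1), q = (2.1,2.2)
        subst hbc
        right
        exact ⟨⟨(a, b, d), ⟨hab, hcd⟩⟩, Or.inl rfl, Or.inl rfl, Or.inr (Or.inr rfl)⟩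
      · by_cases hbd : b = d
        · subst hbd
          rcases lt_or_gt_of_ne hac with h | h
          · -- a < c < b: triple (a,c,b); p=(a,b)=(1,2.2), q=(c,b)=(2.1,2.2)
            right
            exact ⟨⟨(a, c, b), ⟨h, hcd⟩⟩, Or.inr (br3 t hsymm hrel2 a c b h hcd),
              Or.inr (Or.inl rfl), Or.inr (Or.inr rfl)⟩
          · -- c < a < b: triple (c,a,b); p=(a,b)=(2.1,2.2), q=(c,b)=(1,2.2)
            right
            refine ⟨⟨(c, a, b), ⟨h, hab⟩⟩, Or.inl ?_, Or.inr (Or.inr rfl), Or.inr (Or.inl rfl)⟩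
            rw [← lie_skew, br3 t hsymm hrel2 c a b h hab, neg_neg]
        · left
          exact hrel1 a b c d hab.ne hac had hbc hbd hcd.ne

private lemma xi_exists (t : Fin n → Fin n → L)
    (hindbr : LinearIndependent K
      (fun q : {q : Fin n × Fin n × Fin n // q.1 < q.2.1 ∧ q.2.1 < q.2.2} =>
        ⁅t q.1.1 q.1.2.1, t q.1.2.1 q.1.2.2⁆))
    (T₀ : {q : Fin n × Fin n × Fin n // q.1 < q.2.1 ∧ q.2.1 < q.2.2}) :
    ∃ ξ : L →ₗ[K] K, ∀ T' : {q : Fin n × Fin n × Fin n // q.1 < q.2.1 ∧ q.2.1 < q.2.2},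
      ξ ⁅t T'.1.1 T'.1.2.1, t T'.1.2.1 T'.1.2.2⁆ = if T' = T₀ then 1 else 0 := by
  classical
  set F : {q : Fin n × Fin n × Fin n // q.1 < q.2.1 ∧ q.2.1 < q.2.2} → L :=
    fun q => ⁅t q.1.1 q.1.2.1, t q.1.2.1 q.1.2.2⁆ with hF
  set C := Submodule.span K (Set.range F) with hC
  obtain ⟨D, hD⟩ := Submodule.exists_isCompl C
  set Bc : Basis _ K C := Basis.span hindbr with hBc
  refine ⟨(Bc.coord T₀).comp (C.linearProjOfIsCompl D hD), fun T' => ?_⟩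
  have hmem : F T' ∈ C := Submodule.subset_span ⟨T', rfl⟩
  have h2 : C.linearProjOfIsCompl D hD (F T') = Bc T' := by
    have h3 : Bc T' = ⟨F T', hmem⟩ := Subtype.ext (by rw [hBc]; exact congrArg Subtype.val (Basis.span_apply hindbr T'))
    calc C.linearProjOfIsCompl D hD (F T')
        = C.linearProjOfIsCompl D hD ((⟨F T', hmem⟩ : C) : L) := rfl
      _ = ⟨F T', hmem⟩ := Submodule.linearProjOfIsCompl_apply_left hD _
      _ = Bc T' := h3.symm
  show Bc.coord T₀ (C.linearProjOfIsCompl D hD (F T')) = _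
  rw [h2, Basis.coord_apply, Basis.repr_self_apply]

private lemma lie_sum_right' {κ : Type*}
    (r : Finset κ) (b : κ → K) (v : κ → L) (x : L) :
    ⁅x, ∑ j ∈ r, b j • v j⁆ = ∑ j ∈ r, b j • ⁅x, v j⁆ := by
  classical
  induction r using Finset.induction with
  | empty => simp
  | insert _ _ hne ih => rw [Finset.sum_insert hne, lie_add, ih, Finset.sum_insert hne, lie_smul]

private lemma lie_sum_sum {ι κ : Type*}
    (s : Finset ι) (r : Finset κ) (a : ι → K) (b : κ → K) (u : ι → L) (v : κ → L) :
    ⁅∑ i ∈ s, a i • u i, ∑ j ∈ r, b j • v j⁆ = ∑ i ∈ s, ∑ j ∈ r, (a i * b j) • ⁅u i, v j⁆ := by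
  classical
  induction s using Finset.induction with
  | empty => simp
  | insert _ _ hne ih =>
    rw [Finset.sum_insert hne, add_lie, ih, Finset.sum_insert hne, smul_lie, lie_sum_right']
    congr 1
    rw [Finset.smul_sum]
    refine Finset.sum_congr rfl fun j _ => ?_
    rw [smul_smul]

private lemma keyid {V : Type*} [AddCommGroup V] [Module K V]
    (t : Fin n → Fin n → L)
    (hsymm : ∀ i j, t i j = t j i)
    (hrel1 : ∀ i j k l : Fin n, i ≠ j → i ≠ k → i ≠ l → j ≠ k → j ≠ l → k ≠ l →
      ⁅t i j, t k l⁆ = 0)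
    (hrel2 : ∀ i j k : Fin n, i ≠ j → i ≠ k → j ≠ k → ⁅t i j, t i k + t j k⁆ = 0)
    (hindbr : LinearIndependent K
      (fun q : {q : Fin n × Fin n × Fin n // q.1 < q.2.1 ∧ q.2.1 < q.2.2} =>
        ⁅t q.1.1 q.1.2.1, t q.1.2.1 q.1.2.2⁆))
    (Φ : V →ₗ[K] ({p : Fin n × Fin n // p.1 < p.2} → K))
    (hzero : ∀ x y : V,
      ⁅∑ e : {p : Fin n × Fin n // p.1 < p.2}, Φ x e • t e.1.1 e.1.2,
       ∑ e : {p : Fin n × Fin n // p.1 < p.2}, Φ y e • t e.1.1 e.1.2⁆ = (0 : L))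
    (i j k : Fin n) (hij : i < j) (hjk : j < k) (x y : V) :
    (Φ x ⟨(i,j),hij⟩ - Φ x ⟨(i,k),hij.trans hjk⟩) *
      (Φ y ⟨(i,k),hij.trans hjk⟩ - Φ y ⟨(j,k),hjk⟩)
    = (Φ x ⟨(i,k),hij.trans hjk⟩ - Φ x ⟨(j,k),hjk⟩) *
      (Φ y ⟨(i,j),hij⟩ - Φ y ⟨(i,k),hij.trans hjk⟩) := by
  classical
  have hik := hij.trans hjk
  set T₀ : {q : Fin n × Fin n × Fin n // q.1 < q.2.1 ∧ q.2.1 < q.2.2} := ⟨(i,j,k), ⟨hij, hjk⟩⟩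
    with hT₀
  obtain ⟨ξ, hξ⟩ := xi_exists t hindbr T₀
  set e1 : {p : Fin n × Fin n // p.1 < p.2} := ⟨(i,j), hij⟩ with he1
  set e2 : {p : Fin n × Fin n // p.1 < p.2} := ⟨(i,k), hik⟩ with he2
  set e3 : {p : Fin n × Fin n // p.1 < p.2} := ⟨(j,k), hjk⟩ with he3
  have h12 : e1 ≠ e2 := by
    intro h; exact hjk.ne (congrArg (fun e => e.1.2) h)
  have h13 : e1 ≠ e3 := by
    intro h; exact hij.ne (congrArg (fun e => e.1.1) h)
  have h23 : e2 ≠ e3 := by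
    intro h; exact hij.ne (congrArg (fun e => e.1.1) h)
  have hsum : ∑ p : {p : Fin n × Fin n // p.1 < p.2}, ∑ q : {p : Fin n × Fin n // p.1 < p.2},
      (Φ x p * Φ y q) * ξ ⁅t p.1.1 p.1.2, t q.1.1 q.1.2⁆ = 0 := by
    have h0 := congrArg ξ (hzero x y)
    rw [map_zero, lie_sum_sum] at h0
    rw [map_sum] at h0
    simpa only [map_sum, map_smul, smul_eq_mul] using h0
  have hvan : ∀ p q : {p : Fin n × Fin n // p.1 < p.2},
      ((p ≠ e1 ∧ p ≠ e2 ∧ p ≠ e3) ∨ (q ≠ e1 ∧ q ≠ e2 ∧ q ≠ e3)) →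
      ξ ⁅t p.1.1 p.1.2, t q.1.1 q.1.2⁆ = 0 := by
    intro p q hpq
    rcases bracket_classify t hsymm hrel1 hrel2 p q with h0 | ⟨T', hsgn, hp, hq⟩
    · rw [h0, map_zero]
    · by_cases hT : T' = T₀
      · exfalso
        subst hT
        rcases hpq with ⟨hp1, hp2, hp3⟩ | ⟨hq1, hq2, hq3⟩
        · rcases hp with h | h | h
          · exact hp1 (Subtype.ext h)
          · exact hp2 (Subtype.ext h)
          · exact hp3 (Subtype.ext h)
        · rcases hq with h | h | h
          · exact hq1 (Subtype.ext h)
          · exact hq2 (Subtype.ext h)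
          · exact hq3 (Subtype.ext h)
      · rcases hsgn with h | h
        · rw [h, hξ, if_neg hT]
        · rw [h, map_neg, hξ, if_neg hT, neg_zero]
  have hrestrict : ∀ g : {p : Fin n × Fin n // p.1 < p.2} → K,
      (∀ p, (p ≠ e1 ∧ p ≠ e2 ∧ p ≠ e3) → g p = 0) →
      ∑ p, g p = g e1 + g e2 + g e3 := by
    intro g hg
    have hsub : ({e1, e2, e3} : Finset _) ⊆ Finset.univ := Finset.subset_univ _
    rw [← Finset.sum_subset hsub]
    · rw [Finset.sum_insert (by simp [h12, h13]), Finset.sum_insert (by simp [h23]),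
        Finset.sum_singleton, add_assoc]
    · intro p _ hp
      simp only [Finset.mem_insert, Finset.mem_singleton, not_or] at hp
      exact hg p ⟨hp.1, hp.2.1, hp.2.2⟩
  rw [hrestrict _ (fun p hp => by
    rw [hrestrict _ (fun q hq => mul_eq_zero_of_right _ (hvan p q (Or.inl hp)))]
    rw [hvan p e1 (Or.inl hp), hvan p e2 (Or.inl hp), hvan p e3 (Or.inl hp)]
    ring)] at hsum
  rw [hrestrict (fun q => (Φ x e1 * Φ y q) * ξ ⁅t e1.1.1 e1.1.2, t q.1.1 q.1.2⁆)
      (fun q hq => mul_eq_zero_of_right _ (hvan e1 q (Or.inr hq))),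
    hrestrict (fun q => (Φ x e2 * Φ y q) * ξ ⁅t e2.1.1 e2.1.2, t q.1.1 q.1.2⁆)
      (fun q hq => mul_eq_zero_of_right _ (hvan e2 q (Or.inr hq))),
    hrestrict (fun q => (Φ x e3 * Φ y q) * ξ ⁅t e3.1.1 e3.1.2, t q.1.1 q.1.2⁆)
      (fun q hq => mul_eq_zero_of_right _ (hvan e3 q (Or.inr hq)))] at hsum
  -- now compute the nine ξ-values
  have hv13 : ξ ⁅t i j, t j k⁆ = 1 := by
    have := hξ T₀; rw [if_pos rfl] at this; exact this
  have hv12 : ξ ⁅t i j, t i k⁆ = -1 := by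
    rw [br2 t hrel2 i j k hij hjk, map_neg, hv13]
  have hv23 : ξ ⁅t i k, t j k⁆ = -1 := by
    rw [br3 t hsymm hrel2 i j k hij hjk, map_neg, hv13]
  have hv21 : ξ ⁅t i k, t i j⁆ = 1 := by
    rw [← lie_skew, map_neg, hv12, neg_neg]
  have hv31 : ξ ⁅t j k, t i j⁆ = -1 := by
    rw [← lie_skew, map_neg, hv13]
  have hv32 : ξ ⁅t j k, t i k⁆ = 1 := by
    rw [← lie_skew, map_neg, hv23, neg_neg]
  have hv11 : ξ ⁅t i j, t i j⁆ = 0 := by rw [lie_self, map_zero]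
  have hv22 : ξ ⁅t i k, t i k⁆ = 0 := by rw [lie_self, map_zero]
  have hv33 : ξ ⁅t j k, t j k⁆ = 0 := by rw [lie_self, map_zero]
  have hw11 : ξ ⁅t e1.1.1 e1.1.2, t e1.1.1 e1.1.2⁆ = 0 := hv11
  have hw12 : ξ ⁅t e1.1.1 e1.1.2, t e2.1.1 e2.1.2⁆ = -1 := hv12
  have hw13 : ξ ⁅t e1.1.1 e1.1.2, t e3.1.1 e3.1.2⁆ = 1 := hv13
  have hw21 : ξ ⁅t e2.1.1 e2.1.2, t e1.1.1 e1.1.2⁆ = 1 := hv21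
  have hw22 : ξ ⁅t e2.1.1 e2.1.2, t e2.1.1 e2.1.2⁆ = 0 := hv22
  have hw23 : ξ ⁅t e2.1.1 e2.1.2, t e3.1.1 e3.1.2⁆ = -1 := hv23
  have hw31 : ξ ⁅t e3.1.1 e3.1.2, t e1.1.1 e1.1.2⁆ = -1 := hv31
  have hw32 : ξ ⁅t e3.1.1 e3.1.2, t e2.1.1 e2.1.2⁆ = 1 := hv32
  have hw33 : ξ ⁅t e3.1.1 e3.1.2, t e3.1.1 e3.1.2⁆ = 0 := hv33
  rw [hw11, hw12, hw13, hw21, hw22, hw23, hw31, hw32, hw33] at hsum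
  linear_combination -hsum


private lemma collin {V : Type*} [AddCommGroup V] [Module K V]
    (φ1 φ2 φ3 : V →ₗ[K] K)
    (hid : ∀ x y : V, (φ1 x - φ2 x) * (φ2 y - φ3 y) = (φ2 x - φ3 x) * (φ1 y - φ2 y)) :
    ∃ w : (V →ₗ[K] K) × K,
      ((φ1, 1) - (φ2, 1) : (V →ₗ[K] K) × K) ∈ Submodule.span K {w} ∧
      ((φ1, 1) - (φ3, 1) : (V →ₗ[K] K) × K) ∈ Submodule.span K {w} ∧
      ((φ2, 1) - (φ3, 1) : (V →ₗ[K] K) × K) ∈ Submodule.span K {w} := by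
  by_cases hd : φ1 - φ2 = 0
  · have h12 : φ1 = φ2 := sub_eq_zero.mp hd
    refine ⟨(φ2, 1) - (φ3, 1), ?_, ?_, Submodule.mem_span_singleton_self _⟩
    · rw [h12, sub_self]; exact Submodule.zero_mem _
    · rw [h12]; exact Submodule.mem_span_singleton_self _
  · have hx : ∃ x : V, φ1 x - φ2 x ≠ 0 := by
      by_contra hc
      push_neg at hc
      exact hd (by ext v; simpa [sub_eq_zero] using sub_eq_zero.mp (hc v))
    obtain ⟨x₀, hx₀⟩ := hx
    have hkey' : ∃ c : K, ∀ y, φ2 y - φ3 y = c * (φ1 y - φ2 y) := by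
      refine ⟨(φ2 x₀ - φ3 x₀) * (φ1 x₀ - φ2 x₀)⁻¹, fun y => ?_⟩
      field_simp
      linear_combination hid x₀ y
    obtain ⟨c, hkey⟩ := hkey'
    refine ⟨(φ1, 1) - (φ2, 1), Submodule.mem_span_singleton_self _, ?_, ?_⟩
    · rw [Submodule.mem_span_singleton]
      refine ⟨1 + c, ?_⟩
      have : ((φ1, 1) - (φ3, 1) : (V →ₗ[K] K) × K) = ((φ1 - φ3 : V →ₗ[K] K), (0 : K)) := by
        ext <;> simp
      rw [this]
      have h2 : ((φ1, 1) - (φ2, 1) : (V →ₗ[K] K) × K) = ((φ1 - φ2 : V →ₗ[K] K), (0 : K)) := by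
        ext <;> simp
      rw [h2, Prod.smul_mk, smul_zero]
      refine Prod.ext ?_ rfl
      ext y
      simp only [LinearMap.smul_apply, LinearMap.sub_apply, smul_eq_mul]
      linear_combination -hkey y
    · rw [Submodule.mem_span_singleton]
      refine ⟨c, ?_⟩
      have : ((φ2, 1) - (φ3, 1) : (V →ₗ[K] K) × K) = ((φ2 - φ3 : V →ₗ[K] K), (0 : K)) := by
        ext <;> simp
      rw [this]
      have h2 : ((φ1, 1) - (φ2, 1) : (V →ₗ[K] K) × K) = ((φ1 - φ2 : V →ₗ[K] K), (0 : K)) := by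
        ext <;> simp
      rw [h2, Prod.smul_mk, smul_zero]
      refine Prod.ext ?_ rfl
      ext y
      simp only [LinearMap.smul_apply, LinearMap.sub_apply, smul_eq_mul]
      linear_combination -hkey y

end LieStuff



/-- Any abelian Lie subalgebra of the Kohno–Drinfeld Lie algebra `t_n` contained in the
span of the generators `t i j` has dimension at most `n - 1`.  Here `t_n` is formalized
as any Lie algebra with symmetric generators satisfying the Kohno–Drinfeld relations such
that the generators `t i j` (`i<j`) and the brackets `[t i j, t j k]` (`i<j<k`) are
linearly independent. -/
theorem abelian_subalgebra_dim_le
    (K : Type*) [Field K] (n : ℕ)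
    (L : Type*) [LieRing L] [LieAlgebra K L]
    (t : Fin n → Fin n → L)
    (hsymm : ∀ i j, t i j = t j i)
    (hrel1 : ∀ i j k l : Fin n, i ≠ j → i ≠ k → i ≠ l → j ≠ k → j ≠ l → k ≠ l →
      ⁅t i j, t k l⁆ = 0)
    (hrel2 : ∀ i j k : Fin n, i ≠ j → i ≠ k → j ≠ k → ⁅t i j, t i k + t j k⁆ = 0)
    (hindgen : LinearIndependent K
      (fun p : {p : Fin n × Fin n // p.1 < p.2} => t p.1.1 p.1.2))
    (hindbr : LinearIndependent K
      (fun q : {q : Fin n × Fin n × Fin n // q.1 < q.2.1 ∧ q.2.1 < q.2.2} =>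
        ⁅t q.1.1 q.1.2.1, t q.1.2.1 q.1.2.2⁆))
    (W : LieSubalgebra K L)
    (hab : ∀ x ∈ W, ∀ y ∈ W, ⁅x, y⁆ = (0 : L))
    (hspan : (W : Submodule K L) ≤
      Submodule.span K {x : L | ∃ i j : Fin n, i < j ∧ x = t i j}) :
    Module.finrank K W ≤ n - 1 := by
  classical
  set f : {p : Fin n × Fin n // p.1 < p.2} → L := fun p => t p.1.1 p.1.2 with hf
  have hset : {x : L | ∃ i j : Fin n, i < j ∧ x = t i j} = Set.range f := by
    ext x
    constructor
    · rintro ⟨i, j, hij, rfl⟩; exact ⟨⟨(i, j), hij⟩, rfl⟩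
    · rintro ⟨⟨⟨i, j⟩, hij⟩, rfl⟩; exact ⟨i, j, hij, rfl⟩
  set G := Submodule.span K (Set.range f) with hG
  have hWG : (W : Submodule K L) ≤ G := by rw [hG, ← hset]; exact hspan
  set B : Basis {p : Fin n × Fin n // p.1 < p.2} K G := Basis.span hindgen with hB
  haveI : FiniteDimensional K G := FiniteDimensional.span_of_finite K (Set.finite_range f)
  haveI hfdW : FiniteDimensional K (W : Submodule K L) :=
    Submodule.finiteDimensional_of_le hWG
  set W₀ := (W : Submodule K L) with hW₀
  set Φ : W₀ →ₗ[K] ({p : Fin n × Fin n // p.1 < p.2} → K) :=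
    (B.equivFun.toLinearMap).comp (Submodule.inclusion hWG) with hΦ
  have hrecon : ∀ x : W₀, (x : L) = ∑ e, Φ x e • f e := by
    intro x
    have h1 : (Submodule.inclusion hWG x : G)
        = ∑ e, B.equivFun (Submodule.inclusion hWG x) e • B e :=
      (B.sum_equivFun _).symm
    have h2 := congrArg (Submodule.subtype G) h1
    simp only [map_sum, map_smul] at h2
    have hBa : ∀ e, ((B e : G) : L) = f e := by
      intro e; rw [hB]; exact congrArg Subtype.val (Basis.span_apply hindgen e)
    have hΦa : ∀ (x : W₀) e, Φ x e = B.equivFun (Submodule.inclusion hWG x) e := by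
      intro x e; rw [hΦ]; rfl
    simp only [Submodule.coe_subtype, Basis.equivFun_apply] at h2
    rw [show ((x : L)) = ((Submodule.inclusion hWG x : G) : L) from rfl]
    rw [h2]
    refine Finset.sum_congr rfl (fun e _ => ?_)
    rw [hΦa, hBa, Basis.equivFun_apply]
  have hzero : ∀ x y : W₀,
      ⁅∑ e : {p : Fin n × Fin n // p.1 < p.2}, Φ x e • t e.1.1 e.1.2,
       ∑ e : {p : Fin n × Fin n // p.1 < p.2}, Φ y e • t e.1.1 e.1.2⁆ = (0 : L) := by
    intro x y
    have hx : (∑ e : {p : Fin n × Fin n // p.1 < p.2}, Φ x e • t e.1.1 e.1.2) = (x : L) :=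
      (hrecon x).symm
    have hy : (∑ e : {p : Fin n × Fin n // p.1 < p.2}, Φ y e • t e.1.1 e.1.2) = (y : L) :=
      (hrecon y).symm
    rw [hx, hy]
    exact hab _ ((LieSubalgebra.mem_toSubmodule (L' := W)).mp x.2)
      _ ((LieSubalgebra.mem_toSubmodule (L' := W)).mp y.2)
  set φ : {p : Fin n × Fin n // p.1 < p.2} → (W₀ →ₗ[K] K) :=
    fun e => (LinearMap.proj e).comp Φ with hφ
  set ψ : {p : Fin n × Fin n // p.1 < p.2} → ((W₀ →ₗ[K] K) × K) :=
    fun e => (φ e, 1) with hψ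
  have hcol : ∀ (i j k : Fin n) (hij : i < j) (hjk : j < k),
      ∃ w : (W₀ →ₗ[K] K) × K,
        ψ ⟨(i,j),hij⟩ - ψ ⟨(i,k),hij.trans hjk⟩ ∈ Submodule.span K {w} ∧
        ψ ⟨(i,j),hij⟩ - ψ ⟨(j,k),hjk⟩ ∈ Submodule.span K {w} ∧
        ψ ⟨(i,k),hij.trans hjk⟩ - ψ ⟨(j,k),hjk⟩ ∈ Submodule.span K {w} := by
    intro i j k hij hjk
    exact collin (φ ⟨(i,j),hij⟩) (φ ⟨(i,k),hij.trans hjk⟩) (φ ⟨(j,k),hjk⟩)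
      (fun x y => keyid t hsymm hrel1 hrel2 hindbr Φ hzero i j k hij hjk x y)
  set Q : Fin n → Fin n → ((W₀ →ₗ[K] K) × K) := fun i j =>
    if h : i < j then ψ ⟨(i,j),h⟩ else if h' : j < i then ψ ⟨(j,i),h'⟩ else 0 with hQ
  have hQlt : ∀ (i j : Fin n) (h : i < j), Q i j = ψ ⟨(i,j),h⟩ := by
    intro i j h
    rw [hQ]; simp only; rw [dif_pos h]
  have hQgt : ∀ (i j : Fin n) (h : j < i), Q i j = ψ ⟨(j,i),h⟩ := by
    intro i j h
    rw [hQ]; simp only; rw [dif_neg (asymm h), dif_pos h]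
  have hsymQ : ∀ i j, Q i j = Q j i := by
    intro i j
    rcases lt_trichotomy i j with h | h | h
    · rw [hQlt i j h, hQgt j i h]
    · subst h; rfl
    · rw [hQgt i j h, hQlt j i h]
  have HQ : ∀ i j k : Fin n, i < j → j < k →
      ∃ w : (W₀ →ₗ[K] K) × K, Q i j - Q i k ∈ Submodule.span K {w} ∧
        Q i j - Q j k ∈ Submodule.span K {w} ∧ Q i k - Q j k ∈ Submodule.span K {w} := by
    intro i j k hij hjk
    obtain ⟨w, h1, h2, h3⟩ := hcol i j k hij hjk
    rw [hQlt i j hij, hQlt i k (hij.trans hjk), hQlt j k hjk]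
    exact ⟨w, h1, h2, h3⟩
  have hbound := span_bound (K := K) n Q hsymQ HQ
  have hsetψ : {x : (W₀ →ₗ[K] K) × K | ∃ i j, i ≠ j ∧ x = Q i j} = Set.range ψ := by
    ext x
    constructor
    · rintro ⟨i, j, hne, rfl⟩
      rcases lt_or_gt_of_ne hne with h | h
      · rw [hQlt i j h]; exact ⟨_, rfl⟩
      · rw [hQgt i j h]; exact ⟨_, rfl⟩
    · rintro ⟨⟨⟨i, j⟩, hij⟩, rfl⟩
      exact ⟨i, j, hij.ne, (hQlt i j hij).symm⟩
  rw [hsetψ] at hbound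
  -- dual dimension count
  set Γ : Submodule K (Module.Dual K W₀) := Submodule.span K (Set.range φ) with hΓ
  have hΓrank : Module.finrank K Γ = Module.finrank K W₀ := by
    have hann : Γ.dualCoannihilator = ⊥ := by
      rw [eq_bot_iff]
      intro x hx
      rw [Submodule.mem_dualCoannihilator] at hx
      have hx0 : ∀ e, Φ x e = 0 := fun e => hx (φ e) (Submodule.subset_span ⟨e, rfl⟩)
      have hxL : (x : L) = 0 := by
        rw [hrecon x]
        refine Finset.sum_eq_zero (fun e _ => ?_)
        rw [hx0 e, zero_smul]
      exact (Submodule.mem_bot K).mpr (Subtype.ext hxL)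
    have h := Subspace.finrank_add_finrank_dualCoannihilator_eq Γ
    rw [hann, finrank_bot] at h
    omega
  haveI : FiniteDimensional K (Submodule.span K (Set.range ψ)) :=
    FiniteDimensional.span_of_finite K (Set.finite_range ψ)
  have hmap : Γ = Submodule.map (LinearMap.fst K (W₀ →ₗ[K] K) K)
      (Submodule.span K (Set.range ψ)) := by
    rw [Submodule.map_span]
    congr 1
    rw [← Set.range_comp]
    rfl
  have h1 : Module.finrank K Γ ≤ Module.finrank K (Submodule.span K (Set.range ψ)) := by
    rw [hmap]
    exact Submodule.finrank_map_le _ _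
  have hfinal : Module.finrank K W₀ ≤ n - 1 := by omega
  exact hfinal
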